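/- Let R be a commutative noetherian local ring and E, M finitely generated R-modules with M ≅ Hom_R(E, M) and E faithful. Then for every 𝔭 ∈ Ass_R M, the localization E_𝔭 is a free R_𝔭-module of rank 1 (i.e., E_𝔭 ≅ R_𝔭). -/

import Mathlib

open CategoryTheory IsLocalRing

noncomputable section

/-- The `n`-th Ext module `Ext_Q^n(M, N)` as an object of `ModuleCat Q`. -/
abbrev extMod (Q : Type) [CommRing Q] (n : ℕ)
    (M N : Type) [AddCommGroup M] [Module Q M] [AddCommGroup N] [Module Q N] : ModuleCat Q :=
  ((Ext Q (ModuleCat Q) n).obj (Opposite.op (ModuleCat.of Q M))).obj (ModuleCat.of Q N)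

/-- The `n`-th Tor module `Tor_n^Q(M, N)` as an object of `ModuleCat Q`. -/
abbrev torMod (Q : Type) [CommRing Q] (n : ℕ)
    (M N : Type) [AddCommGroup M] [Module Q M] [AddCommGroup N] [Module Q N] : ModuleCat Q :=
  ((Tor (ModuleCat Q) n).obj (ModuleCat.of Q M)).obj (ModuleCat.of Q N)

/-- The depth of a module over a local ring: the infimum of `n` with `Ext^n(k, M) ≠ 0`. -/
noncomputable def rdepth (R : Type) [CommRing R] [IsLocalRing R]
    (M : Type) [AddCommGroup M] [Module R M] : ℕ∞ :=
  sInf ((fun n : ℕ => (n : ℕ∞)) '' {n : ℕ | Nontrivial (extMod R n (ResidueField R) M)})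

/-- The Krull dimension of a module, as the dimension of `R / Ann M`. -/
noncomputable def moduleKrullDim (R : Type) [CommRing R]
    (M : Type) [AddCommGroup M] [Module R M] : WithBot (WithTop ℕ) :=
  ringKrullDim (R ⧸ Module.annihilator R M)

/-- A noetherian local ring is regular if its maximal ideal is generated by
`dim R` many elements. -/
def IsRegularLocal (Q : Type) [CommRing Q] [IsLocalRing Q] : Prop :=
  IsNoetherianRing Q ∧ ∃ s : Finset Q, Ideal.span (s : Set Q) = maximalIdeal Q ∧
    ((s.card : WithTop ℕ) : WithBot (WithTop ℕ)) = ringKrullDim Q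

/-- The projective dimension of a module, via vanishing of Ext. -/
noncomputable def projDim (Q : Type) [CommRing Q]
    (M : Type) [AddCommGroup M] [Module Q M] : ℕ∞ :=
  sInf {n : ℕ∞ | ∀ (N : ModuleCat Q) (k : ℕ), n < (k : ℕ∞) →
    Subsingleton (((Ext Q (ModuleCat Q) k).obj (Opposite.op (ModuleCat.of Q M))).obj N)}

/-- A local ring is Cohen–Macaulay if its depth equals its Krull dimension. -/
def IsCohenMacaulayLocal (R : Type) [CommRing R] [IsLocalRing R] : Prop :=
  WithBot.some (rdepth R R) = ringKrullDim R

/-- A local ring is Gorenstein if it has finite injective dimension over itself. -/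
def IsGorensteinLocal (R : Type) [CommRing R] [IsLocalRing R] : Prop :=
  ∃ n : ℕ, ∀ (N : ModuleCat R) (k : ℕ), n < k →
    Subsingleton (((Ext R (ModuleCat R) k).obj (Opposite.op N)).obj (ModuleCat.of R R))

end

open IsLocalRing Submodule Module TensorProduct

/-- upgrade an R-linear equiv between localized modules to Rₛ-linear. -/
noncomputable def LinearEquiv.extendScalarsOfIsLocalization' {R : Type*} [CommSemiring R]
    (S : Submonoid R) (A : Type*) [CommSemiring A] [Algebra R A] [IsLocalization S A]
    {M N : Type*} [AddCommMonoid M] [Module R M] [Module A M] [IsScalarTower R A M]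
    [AddCommMonoid N] [Module R N] [Module A N] [IsScalarTower R A N]
    (e : M ≃ₗ[R] N) : M ≃ₗ[A] N :=
  LinearEquiv.ofLinear (e.toLinearMap.extendScalarsOfIsLocalization S A)
    (e.symm.toLinearMap.extendScalarsOfIsLocalization S A)
    (by ext x; simp) (by ext x; simp)

theorem aux_free (S : Type*) [CommRing S] [IsLocalRing S] [IsNoetherianRing S]
    (X Y : Type*) [AddCommGroup X] [Module S X] [Module.Finite S X]
    [AddCommGroup Y] [Module S Y] [Module.Finite S Y]
    (hX : Module.annihilator S X = ⊥)
    (e : Y ≃ₗ[S] (X →ₗ[S] Y))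
    (y : Y) (hy : y ≠ 0) (hty : ∀ a ∈ maximalIdeal S, a • y = 0) :
    Nonempty (X ≃ₗ[S] S) := by
  classical
  set k := ResidueField S
  have hsurj : Function.Surjective (algebraMap S k) := Ideal.Quotient.mk_surjective
  set T : Submodule S Y := torsionBySet S Y (maximalIdeal S : Set S) with hT
  set T₂ : Submodule S (X →ₗ[S] Y) :=
    torsionBySet S (X →ₗ[S] Y) (maximalIdeal S : Set S) with hT₂
  letI : Module k ↥T := (inferInstance : Module (S ⧸ maximalIdeal S) ↥T)
  letI : IsScalarTower S k ↥T :=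
    (inferInstance : IsScalarTower S (S ⧸ maximalIdeal S) ↥T)
  letI : Module k ↥T₂ := (inferInstance : Module (S ⧸ maximalIdeal S) ↥T₂)
  letI : IsScalarTower S k ↥T₂ :=
    (inferInstance : IsScalarTower S (S ⧸ maximalIdeal S) ↥T₂)
  -- step A : T ≃ T₂
  have eq1 : T.map (e : Y →ₗ[S] (X →ₗ[S] Y)) = T₂ := by
    ext f
    simp only [Submodule.mem_map, hT, hT₂, mem_torsionBySet_iff]
    constructor
    · rintro ⟨y', hy', rfl⟩ a
      rw [← map_smul, hy' a, map_zero]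
    · intro hf
      refine ⟨e.symm f, fun a => ?_, by simp⟩
      apply e.injective
      rw [map_smul, e.apply_symm_apply, hf a, map_zero]
  let e1 : ↥T ≃ₗ[S] ↥T₂ := LinearEquiv.ofSubmodules e T T₂ eq1
  -- step B : T₂ ≃ (X →ₗ[S] T)
  let e2 : ↥T₂ ≃ₗ[S] (X →ₗ[S] ↥T) :=
    { toFun := fun f => LinearMap.codRestrict T f.1 fun x =>
        (mem_torsionBySet_iff _ _).mpr fun a => by
          have h := (mem_torsionBySet_iff _ _).mp f.2 a
          rw [← LinearMap.smul_apply, h, LinearMap.zero_apply]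
      invFun := fun g => ⟨T.subtype ∘ₗ g, (mem_torsionBySet_iff _ _).mpr fun a => by
        ext x
        have h := (mem_torsionBySet_iff _ _).mp (g x).2 a
        simpa using h⟩
      map_add' := fun f g => rfl
      map_smul' := fun c f => rfl
      left_inv := fun f => rfl
      right_inv := fun g => rfl }
  let e12 : ↥T ≃ₗ[k] (X →ₗ[S] ↥T) :=
    LinearEquiv.extendScalarsOfSurjective hsurj (e1.trans e2)
  let e3 : (X →ₗ[S] ↥T) ≃ₗ[k] (k ⊗[S] X →ₗ[k] ↥T) :=
    LinearMap.liftBaseChangeEquiv k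
  -- finiteness
  haveI : IsNoetherian S Y := isNoetherian_of_isNoetherianRing_of_finite S Y
  haveI : Module.Finite S ↥T :=
    Module.Finite.iff_fg.mpr (IsNoetherian.noetherian T)
  haveI : Module.Finite k ↥T := Module.Finite.of_restrictScalars_finite S k ↥T
  haveI : Nontrivial ↥T := by
    refine ⟨⟨⟨y, (mem_torsionBySet_iff _ _).mpr fun a => hty a a.2⟩, 0, ?_⟩⟩
    simpa [Subtype.ext_iff] using hy
  have hd : finrank k ↥T ≠ 0 := finrank_pos.ne'
  have hcount : finrank k ↥T = finrank k (k ⊗[S] X) * finrank k ↥T := by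
    have h := (e12.trans e3).finrank_eq
    rwa [Module.finrank_linearMap] at h
  have hr : finrank k (k ⊗[S] X) = 1 := by
    have := hcount
    nlinarith [Nat.pos_of_ne_zero hd]
  -- obtain a generator
  obtain ⟨x, hx⟩ := TensorProduct.mk_surjective S X k hsurj
    ((finBasisOfFinrankEq k (k ⊗[S] X) hr) 0)
  have hspan : Submodule.span S (Set.range (fun _ : Fin 1 => x)) = ⊤ :=
    IsLocalRing.span_eq_top_of_tmul_eq_basis (R := S) (fun _ : Fin 1 => x)
      (finBasisOfFinrankEq k (k ⊗[S] X) hr) (fun i => by rw [Subsingleton.elim i 0]; exact hx)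
  rw [Set.range_const] at hspan
  have hsurjx : Function.Surjective (LinearMap.toSpanSingleton S X x) := by
    rw [← LinearMap.range_eq_top, ← LinearMap.span_singleton_eq_range]
    exact hspan
  have hinjx : Function.Injective (LinearMap.toSpanSingleton S X x) := by
    rw [← LinearMap.ker_eq_bot]
    ext a
    simp only [LinearMap.mem_ker, Submodule.mem_bot, LinearMap.toSpanSingleton_apply]
    constructor
    · intro ha
      have : a ∈ Module.annihilator S X := by
        rw [Module.mem_annihilator]
        intro z
        have hz : z ∈ Submodule.span S {x} := hspan ▸ Submodule.mem_top
        obtain ⟨c, rfl⟩ := Submodule.mem_span_singleton.mp hz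
        rw [smul_comm, ha, smul_zero]
      rwa [hX, Submodule.mem_bot] at this
    · rintro rfl; exact zero_smul _ _
  exact ⟨(LinearEquiv.ofBijective _ ⟨hinjx, hsurjx⟩).symm⟩


/-- if M ≅ Hom_R(E, M) with E faithful, then E_𝔭 ≅ R_𝔭 for every
𝔭 ∈ Ass_R M. -/
theorem stmt_17 (R : Type) [CommRing R] [IsLocalRing R] [IsNoetherianRing R]
    (E M : Type) [AddCommGroup E] [Module R E] [Module.Finite R E]
    [AddCommGroup M] [Module R M] [Module.Finite R M]
    (hfaith : Module.annihilator R E = ⊥)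
    (e : Nonempty (M ≃ₗ[R] (E →ₗ[R] M)))
    (p : Ideal R) [p.IsPrime] (hp : p ∈ associatedPrimes R M) :
    Nonempty ((LocalizedModule p.primeCompl E) ≃ₗ[Localization.AtPrime p]
      Localization.AtPrime p) := by
  classical
  obtain ⟨e0⟩ := e
  obtain ⟨-, x, hx⟩ := isAssociatedPrime_iff.mp hp
  set Sp := p.primeCompl with hSp
  set S := Localization.AtPrime p with hS
  set X := LocalizedModule Sp E with hXdef
  set Mp := LocalizedModule Sp M with hMpdef
  haveI : IsNoetherianRing S := IsLocalization.isNoetherianRing Sp S inferInstance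
  haveI : Module.Finite S X :=
    Module.Finite.of_isLocalizedModule Sp (LocalizedModule.mkLinearMap Sp E)
  haveI : Module.Finite S Mp :=
    Module.Finite.of_isLocalizedModule Sp (LocalizedModule.mkLinearMap Sp M)
  haveI : Module.FinitePresentation R E := Module.finitePresentation_of_finite R E
  -- the localized hom equivalence
  haveI : IsScalarTower R S (X →ₗ[S] Mp) := by
    constructor
    intro r s f
    ext z
    simp [Algebra.smul_def, mul_smul]
  let F := LocalizedModule.map Sp (M := E) (N := M)
  let eA : Mp ≃ₗ[S] LocalizedModule Sp (E →ₗ[R] M) :=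
    LinearEquiv.extendScalarsOfIsLocalization' Sp S
      (IsLocalizedModule.iso Sp
        ((LocalizedModule.mkLinearMap Sp (E →ₗ[R] M)) ∘ₗ (e0 : M →ₗ[R] (E →ₗ[R] M))))
  let eB : LocalizedModule Sp (E →ₗ[R] M) ≃ₗ[S] (X →ₗ[S] Mp) :=
    LinearEquiv.extendScalarsOfIsLocalization' Sp S (IsLocalizedModule.iso Sp F)
  -- the faithfulness of X
  have hX : Module.annihilator S X = ⊥ := by
    rw [eq_bot_iff]
    intro a ha
    rw [Module.mem_annihilator] at ha
    obtain ⟨⟨r, s⟩, hrs⟩ := IsLocalization.mk'_surjective Sp a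
    obtain ⟨G, hG⟩ := Module.Finite.fg_top (R := R) (M := E)
    have key : ∀ g : E, ∃ t : Sp, (↑t * r) • g = 0 := by
      intro g
      have h1 : algebraMap R S r • LocalizedModule.mk g (1 : Sp) = 0 := by
        have heq : algebraMap R S r = algebraMap R S (s : R) * a := by
          rw [← hrs, ← IsLocalization.mk'_spec S r s, mul_comm]
        rw [heq, mul_smul, ha, smul_zero]
      rw [algebraMap_smul, LocalizedModule.smul'_mk] at h1
      have h2 : LocalizedModule.mk (r • g) (1 : Sp) = LocalizedModule.mk (0 : E) 1 := by
        rw [h1, LocalizedModule.zero_mk]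
      rw [LocalizedModule.mk_eq] at h2
      obtain ⟨u, hu⟩ := h2
      refine ⟨u, ?_⟩
      simpa [mul_smul, Submonoid.smul_def] using hu
    choose t ht using key
    set tt : Sp := ∏ g ∈ G, t g with htt
    have hann : (↑tt * r) ∈ Module.annihilator R E := by
      rw [Module.mem_annihilator]
      intro m
      have hm : m ∈ Submodule.span R (G : Set E) := hG ▸ Submodule.mem_top
      induction hm using Submodule.span_induction with
      | mem g hg =>
        obtain ⟨tt', htt'⟩ : ∃ tt' : R, (tt : R) = tt' * (t g : R) := by
          refine ⟨↑(∏ h ∈ G.erase g, t h), ?_⟩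
          rw [htt, ← Finset.mul_prod_erase G _ hg]
          push_cast
          ring
        rw [htt', mul_assoc, mul_smul, ht g, smul_zero]
      | zero => simp
      | add _ _ _ _ h1 h2 => simp [smul_add, h1, h2]
      | smul c _ _ h1 => rw [smul_comm, h1, smul_zero]
    rw [hfaith, Submodule.mem_bot] at hann
    have : a = 0 := by
      rw [← hrs, IsLocalization.mk'_eq_zero_iff]
      exact ⟨tt, hann⟩
    simp [this]
  -- the torsion element
  set y : Mp := LocalizedModule.mk x 1 with hy'
  have hy : y ≠ 0 := by
    intro h
    rw [hy', show (0 : Mp) = LocalizedModule.mk (0 : M) 1 from (LocalizedModule.zero_mk _).symm,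
      LocalizedModule.mk_eq] at h
    obtain ⟨u, hu⟩ := h
    simp only [one_smul, smul_zero] at hu
    have : (u : R) ∈ p := by
      rw [hx, Submodule.mem_colon_singleton, Submodule.mem_bot]
      exact hu
    exact u.2 this
  have hty : ∀ a ∈ maximalIdeal S, a • y = 0 := by
    have hle : maximalIdeal S ≤ LinearMap.ker (LinearMap.toSpanSingleton S Mp y) := by
      rw [← Localization.AtPrime.map_eq_maximalIdeal, Ideal.map_le_iff_le_comap]
      intro r hr
      simp only [Ideal.mem_comap, LinearMap.mem_ker, LinearMap.toSpanSingleton_apply]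
      change (algebraMap R S r) • y = 0
      rw [algebraMap_smul, hy', LocalizedModule.smul'_mk]
      have : r • x = 0 := by
        rw [← Submodule.mem_bot R, ← Submodule.mem_colon_singleton, ← hx]; exact hr
      rw [this, LocalizedModule.zero_mk]
    intro a ha
    exact hle ha
  exact aux_free S X Mp hX (eA.trans eB) y hy hty
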